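/- arXiv:0905.2646 — 2 statements merged into one kernel-verified Lean document; each statement's English description precedes it below -/
import Mathlib

section
/- Let s ∈ (0,1], let K be an m×r real matrix of full column rank (r ≤ m), and let M_1, M_2 be real symmetric positive definite m×m matrices. Then: (i) if M_2 - M_1 is positive semidefinite, then tr((Kᵀ M_1 K)^s) ≤ tr((Kᵀ M_2 K)^s); and (ii) for every α ∈ [0,1], α·tr((Kᵀ M_1 K)^s) + (1-α)·tr((Kᵀ M_2 K)^s) ≤ tr((Kᵀ(α M_1 + (1-α) M_2)K)^s). (The function ψ_{p,K}(M) = tr((Kᵀ M K)^{-p}) with p = -s ∈ [-1,0) is increasing and concave on positive definite matrices.) -/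
open Matrix

/-- The real power `S^s` of a symmetric matrix, defined via the spectral
decomposition: if `S = U diag(μ) Uᵀ` then `S^s = U diag(μ^s) Uᵀ`
(junk value `0` if `S` is not symmetric). -/
noncomputable def mpow {k : ℕ} (S : Matrix (Fin k) (Fin k) ℝ) (s : ℝ) :
    Matrix (Fin k) (Fin k) ℝ :=
  if h : S.IsHermitian then h.cfc (fun x => x ^ s) else 0

section helpers
open Finset
variable {k : ℕ}


variable {k : ℕ}

lemma conj_diag_entry (Q : Matrix (Fin k) (Fin k) ℝ) (d : Fin k → ℝ) (i : Fin k) :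
    (Qᴴ * diagonal d * Q) i i = ∑ j, d j * (Q j i) ^ 2 := by
  simp only [mul_apply, diagonal_apply, conjTranspose_apply, star_trivial, mul_ite, mul_zero,
    Finset.sum_ite_eq', Finset.mem_univ, if_true]
  exact Finset.sum_congr rfl fun l _ => by ring

lemma col_sq_sum {Q : Matrix (Fin k) (Fin k) ℝ} (hQ : Qᴴ * Q = 1) (i : Fin k) :
    ∑ j, (Q j i) ^ 2 = 1 := by
  have := congrFun (congrFun hQ i) i
  simpa [mul_apply, conjTranspose_apply, sq] using this

lemma mpow_eq {S : Matrix (Fin k) (Fin k) ℝ} (h : S.IsHermitian) (s : ℝ) :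
    mpow S s = (h.eigenvectorUnitary : Matrix (Fin k) (Fin k) ℝ) *
      diagonal (fun j => h.eigenvalues j ^ s) *
      (star (h.eigenvectorUnitary : Matrix (Fin k) (Fin k) ℝ)) := by
  rw [mpow, dif_pos h, Matrix.IsHermitian.cfc]
  congr 2

lemma trace_mpow {S : Matrix (Fin k) (Fin k) ℝ} (h : S.IsHermitian) (s : ℝ) :
    (mpow S s).trace = ∑ j, h.eigenvalues j ^ s := by
  rw [mpow_eq h s, Matrix.trace_mul_cycle]
  rw [Unitary.coe_star_mul_self, Matrix.one_mul, Matrix.trace_diagonal]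

lemma trace_conj_unitary {M W : Matrix (Fin k) (Fin k) ℝ} (hW : W * Wᴴ = 1) :
    M.trace = ∑ i, (Wᴴ * M * W) i i := by
  have : (Wᴴ * M * W).trace = M.trace := by
    rw [Matrix.trace_mul_cycle, hW, Matrix.one_mul]
  rw [← this, Matrix.trace]
  rfl

lemma diag_conj_mpow_le {A : Matrix (Fin k) (Fin k) ℝ} (hA : A.PosSemidef)
    {s : ℝ} (hs0 : 0 < s) (hs1 : s ≤ 1)
    {W : Matrix (Fin k) (Fin k) ℝ} (hW : Wᴴ * W = 1) (i : Fin k) :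
    (Wᴴ * mpow A s * W) i i ≤ ((Wᴴ * A * W) i i) ^ s := by
  have h := hA.1
  obtain ⟨U, hU⟩ : ∃ U : Matrix (Fin k) (Fin k) ℝ,
      U = (h.eigenvectorUnitary : Matrix (Fin k) (Fin k) ℝ) := ⟨_, rfl⟩
  have hUU : Uᴴ * U = 1 := by
    rw [← Matrix.star_eq_conjTranspose, hU, Unitary.coe_star_mul_self]
  have hUU' : U * Uᴴ = 1 := mul_eq_one_comm.mp hUU
  obtain ⟨Q, hQdef⟩ : ∃ Q : Matrix (Fin k) (Fin k) ℝ, Q = Uᴴ * W := ⟨_, rfl⟩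
  have hQ : Qᴴ * Q = 1 := by
    rw [hQdef, Matrix.conjTranspose_mul, Matrix.conjTranspose_conjTranspose,
      Matrix.mul_assoc, ← Matrix.mul_assoc U, hUU', Matrix.one_mul, hW]
  have e1 : Wᴴ * mpow A s * W = Qᴴ * diagonal (fun j => h.eigenvalues j ^ s) * Q := by
    rw [mpow_eq h, hQdef, Matrix.conjTranspose_mul, Matrix.conjTranspose_conjTranspose,
      Matrix.star_eq_conjTranspose, ← hU]
    simp only [Matrix.mul_assoc]
  have e2 : Wᴴ * A * W = Qᴴ * diagonal h.eigenvalues * Q := by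
    have hd : Uᴴ * A * U = diagonal h.eigenvalues := by
      have := h.conjStarAlgAut_star_eigenvectorUnitary
      rw [Unitary.conjStarAlgAut_star_apply] at this
      rw [Matrix.star_eq_conjTranspose, ← hU] at this
      rw [this]
      rfl
    have hA2 : U * diagonal h.eigenvalues * Uᴴ = A := by
      rw [← hd]
      simp only [Matrix.mul_assoc]
      rw [hUU', Matrix.mul_one, ← Matrix.mul_assoc, hUU', Matrix.one_mul]
    conv_lhs => rw [← hA2]
    rw [hQdef, Matrix.conjTranspose_mul, Matrix.conjTranspose_conjTranspose]
    simp only [Matrix.mul_assoc]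
  rw [e1, e2, conj_diag_entry, conj_diag_entry]
  have hw1 : ∑ j, (Q j i)^2 = 1 := col_sq_sum hQ i
  have hjen := (Real.concaveOn_rpow hs0.le hs1).le_map_sum (t := Finset.univ)
    (w := fun j => (Q j i)^2) (p := h.eigenvalues)
    (fun j _ => sq_nonneg _) hw1 (fun j _ => hA.eigenvalues_nonneg j)
  simpa [smul_eq_mul, mul_comm] using hjen

lemma psd_diag_nonneg {A : Matrix (Fin k) (Fin k) ℝ} (hA : A.PosSemidef) (i : Fin k) :
    0 ≤ A i i := by
  have := hA.dotProduct_mulVec_nonneg (Pi.single i 1)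
  simpa [Matrix.mulVec_single, dotProduct, Pi.single_apply] using this

lemma psd_smul {c : ℝ} (hc : 0 ≤ c) {A : Matrix (Fin k) (Fin k) ℝ} (hA : A.PosSemidef) :
    (c • A).PosSemidef := by
  refine ⟨?_, fun x => ?_⟩
  · unfold Matrix.IsHermitian
    rw [Matrix.conjTranspose_smul, hA.1.eq]
    simp
  · have := mul_nonneg hc (hA.2 x)
    simpa [Finsupp.sum, Finset.mul_sum, mul_assoc, mul_left_comm] using this

lemma diag_conj_eigen {B : Matrix (Fin k) (Fin k) ℝ} (h : B.IsHermitian) :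
    (h.eigenvectorUnitary : Matrix (Fin k) (Fin k) ℝ)ᴴ * B *
      (h.eigenvectorUnitary : Matrix (Fin k) (Fin k) ℝ) = diagonal h.eigenvalues := by
  have := h.conjStarAlgAut_star_eigenvectorUnitary
  rw [Unitary.conjStarAlgAut_star_apply] at this
  rw [Matrix.star_eq_conjTranspose] at this
  rw [this]
  rfl

lemma trace_mpow_mono {A B : Matrix (Fin k) (Fin k) ℝ} (hA : A.PosSemidef) (hB : B.PosSemidef)
    (hAB : (B - A).PosSemidef) {s : ℝ} (hs0 : 0 < s) (hs1 : s ≤ 1) :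
    (mpow A s).trace ≤ (mpow B s).trace := by
  have h := hB.1
  obtain ⟨W, hWdef⟩ : ∃ W : Matrix (Fin k) (Fin k) ℝ,
      W = (h.eigenvectorUnitary : Matrix (Fin k) (Fin k) ℝ) := ⟨_, rfl⟩
  have hW : Wᴴ * W = 1 := by
    rw [← Matrix.star_eq_conjTranspose, hWdef, Unitary.coe_star_mul_self]
  have hW' : W * Wᴴ = 1 := mul_eq_one_comm.mp hW
  have hsub : Wᴴ * B * W - Wᴴ * A * W = Wᴴ * (B - A) * W := by
    rw [Matrix.mul_sub, Matrix.sub_mul]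
  calc (mpow A s).trace = ∑ i, (Wᴴ * mpow A s * W) i i := trace_conj_unitary hW'
    _ ≤ ∑ i, ((Wᴴ * A * W) i i) ^ s :=
        Finset.sum_le_sum fun i _ => diag_conj_mpow_le hA hs0 hs1 hW i
    _ ≤ ∑ i, ((Wᴴ * B * W) i i) ^ s := by
        refine Finset.sum_le_sum fun i _ => Real.rpow_le_rpow
          (psd_diag_nonneg (hA.conjTranspose_mul_mul_same W) i) ?_ hs0.le
        have h1 := psd_diag_nonneg (hAB.conjTranspose_mul_mul_same W) i
        rw [← hsub] at h1
        rw [Matrix.sub_apply] at h1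
        linarith
    _ = ∑ i, (h.eigenvalues i) ^ s := by
        rw [hWdef, diag_conj_eigen h]
        simp
    _ = (mpow B s).trace := (trace_mpow h s).symm

lemma trace_mpow_concave {A B : Matrix (Fin k) (Fin k) ℝ} (hA : A.PosSemidef) (hB : B.PosSemidef)
    {s : ℝ} (hs0 : 0 < s) (hs1 : s ≤ 1) {α : ℝ} (hα0 : 0 ≤ α) (hα1 : α ≤ 1) :
    α * (mpow A s).trace + (1 - α) * (mpow B s).trace ≤
      (mpow (α • A + (1 - α) • B) s).trace := by
  have hC : (α • A + (1 - α) • B).PosSemidef :=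
    (psd_smul hα0 hA).add (psd_smul (by linarith) hB)
  have h := hC.1
  obtain ⟨W, hWdef⟩ : ∃ W : Matrix (Fin k) (Fin k) ℝ,
      W = (h.eigenvectorUnitary : Matrix (Fin k) (Fin k) ℝ) := ⟨_, rfl⟩
  have hW : Wᴴ * W = 1 := by
    rw [← Matrix.star_eq_conjTranspose, hWdef, Unitary.coe_star_mul_self]
  have hW' : W * Wᴴ = 1 := mul_eq_one_comm.mp hW
  have hexp : ∀ i, (Wᴴ * (α • A + (1 - α) • B) * W) i i
      = α * ((Wᴴ * A * W) i i) + (1 - α) * ((Wᴴ * B * W) i i) := by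
    intro i
    rw [Matrix.mul_add, Matrix.add_mul, Matrix.mul_smul, Matrix.smul_mul, Matrix.mul_smul,
      Matrix.smul_mul]
    simp [Matrix.add_apply, Matrix.smul_apply]
  have key : ∀ i, α * ((Wᴴ * mpow A s * W) i i) + (1 - α) * ((Wᴴ * mpow B s * W) i i)
      ≤ ((Wᴴ * (α • A + (1 - α) • B) * W) i i) ^ s := by
    intro i
    have hxA : 0 ≤ (Wᴴ * A * W) i i := psd_diag_nonneg (hA.conjTranspose_mul_mul_same W) i
    have hxB : 0 ≤ (Wᴴ * B * W) i i := psd_diag_nonneg (hB.conjTranspose_mul_mul_same W) i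
    have hcc := (Real.concaveOn_rpow hs0.le hs1).2 hxA hxB hα0 (by linarith : (0:ℝ) ≤ 1 - α)
      (by ring)
    rw [hexp i]
    calc α * ((Wᴴ * mpow A s * W) i i) + (1 - α) * ((Wᴴ * mpow B s * W) i i)
        ≤ α * ((Wᴴ * A * W) i i) ^ s + (1 - α) * ((Wᴴ * B * W) i i) ^ s := by
          have h1 := diag_conj_mpow_le hA hs0 hs1 hW i
          have h2 := diag_conj_mpow_le hB hs0 hs1 hW i
          have := mul_le_mul_of_nonneg_left h1 hα0
          have := mul_le_mul_of_nonneg_left h2 (by linarith : (0:ℝ) ≤ 1 - α)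
          nlinarith [mul_le_mul_of_nonneg_left h1 hα0,
            mul_le_mul_of_nonneg_left h2 (by linarith : (0:ℝ) ≤ 1 - α)]
      _ ≤ (α * ((Wᴴ * A * W) i i) + (1 - α) * ((Wᴴ * B * W) i i)) ^ s := by
          simpa [smul_eq_mul] using hcc
  calc α * (mpow A s).trace + (1 - α) * (mpow B s).trace
      = ∑ i, (α * ((Wᴴ * mpow A s * W) i i) + (1 - α) * ((Wᴴ * mpow B s * W) i i)) := by
        rw [trace_conj_unitary (M := mpow A s) hW', trace_conj_unitary (M := mpow B s) hW',
          Finset.sum_add_distrib, Finset.mul_sum, Finset.mul_sum]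
    _ ≤ ∑ i, ((Wᴴ * (α • A + (1 - α) • B) * W) i i) ^ s := Finset.sum_le_sum fun i _ => key i
    _ = ∑ i, (h.eigenvalues i) ^ s := by
        rw [hWdef, diag_conj_eigen h]
        simp
    _ = (mpow (α • A + (1 - α) • B) s).trace := (trace_mpow h s).symm


end helpers

/-- For `s ∈ (0,1]` and `K` of full column rank, the function
`M ↦ tr((Kᵀ M K)^s)` is increasing and concave on positive definite matrices
(i.e. `ψ_{p,K}(M) = tr((Kᵀ M K)^{-p})`, `p = -s ∈ [-1,0)`, is increasing and
concave). -/
theorem stmt_14 {m r : ℕ} (hr : 0 < r) (hrm : r ≤ m)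
    (s : ℝ) (hs0 : 0 < s) (hs1 : s ≤ 1)
    (K : Matrix (Fin m) (Fin r) ℝ) (hK : K.rank = r)
    (M₁ M₂ : Matrix (Fin m) (Fin m) ℝ)
    (hM₁ : M₁.PosDef) (hM₂ : M₂.PosDef) :
    ((M₂ - M₁).PosSemidef →
      (mpow (Kᵀ * M₁ * K) s).trace ≤ (mpow (Kᵀ * M₂ * K) s).trace) ∧
    (∀ α : ℝ, 0 ≤ α → α ≤ 1 →
      α * (mpow (Kᵀ * M₁ * K) s).trace + (1 - α) * (mpow (Kᵀ * M₂ * K) s).trace ≤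
        (mpow (Kᵀ * (α • M₁ + (1 - α) • M₂) * K) s).trace) := by
  have hKT : Kᵀ = Kᴴ := by
    ext i j
    simp [Matrix.conjTranspose_apply]
  have hpsd : ∀ {M : Matrix (Fin m) (Fin m) ℝ}, M.PosSemidef → (Kᵀ * M * K).PosSemidef := by
    intro M hM
    rw [hKT]
    exact hM.conjTranspose_mul_mul_same K
  have hA := hpsd hM₁.posSemidef
  have hB := hpsd hM₂.posSemidef
  constructor
  · intro hsub
    refine trace_mpow_mono hA hB ?_ hs0 hs1
    have : Kᵀ * M₂ * K - Kᵀ * M₁ * K = Kᵀ * (M₂ - M₁) * K := by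
      rw [Matrix.mul_sub, Matrix.sub_mul]
    rw [this]
    exact hpsd hsub
  · intro α hα0 hα1
    have hexp : Kᵀ * (α • M₁ + (1 - α) • M₂) * K
        = α • (Kᵀ * M₁ * K) + (1 - α) • (Kᵀ * M₂ * K) := by
      rw [Matrix.mul_add, Matrix.add_mul, Matrix.mul_smul, Matrix.smul_mul, Matrix.mul_smul,
        Matrix.smul_mul]
    rw [hexp]
    exact trace_mpow_concave hA hB hs0 hs1 hα0 hα1
end

section
/- Let n = m = 2, z_1 = 1, z_2 = -1, x_i = (1, z_i)ᵀ and A_i = x_i x_iᵀ. For any probability vector w = (w_1, w_2) with w_1, w_2 > 0, the iteration (alg2) with λ = 1, namely w'_i = w_i (z_i - z̄)ᵀ M_c(w)^{-1} (z_i - z̄) / (m-1) where z̄ = w_1 z_1 + w_2 z_2 and M_c(w) = Σ_i w_i (z_i - z̄)(z_i - z̄)ᵀ, maps (w_1, w_2) to (w_2, w_1). In particular, unless w_1 = w_2 = 1/2, the algorithm oscillates between two distinct points and does not converge. (Non-convergence example for λ = 1: the monotonicity is not strict.) -/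
open Filter Topology

/-- Non-convergence example for `λ = 1`: with `n = m = 2`, `z₁ = 1`,
`z₂ = -1`, the iteration (alg2) maps `(w₁, w₂)` to `(w₂, w₁)`; in particular,
unless `w₁ = w₂ = 1/2`, the algorithm oscillates between two distinct points
and does not converge. Here `z̄(v) = v₁·1 + v₂·(-1)` and
`M_c(v) = v₁(1 - z̄)² + v₂(-1 - z̄)²` is a `1×1` matrix (a real number), and
the update reads `w'ᵢ = wᵢ (zᵢ - z̄)² / M_c(w)` (with `m - 1 = 1`). -/
theorem stmt_19
    (zbar Mc : ℝ × ℝ → ℝ)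
    (hzbar : ∀ v : ℝ × ℝ, zbar v = v.1 * 1 + v.2 * (-1))
    (hMc : ∀ v : ℝ × ℝ, Mc v = v.1 * (1 - zbar v) ^ 2 + v.2 * (-1 - zbar v) ^ 2)
    (T : ℝ × ℝ → ℝ × ℝ)
    (hT : ∀ v : ℝ × ℝ, T v =
      (v.1 * (1 - zbar v) ^ 2 / Mc v, v.2 * (-1 - zbar v) ^ 2 / Mc v))
    (w₁ w₂ : ℝ) (hw₁ : 0 < w₁) (hw₂ : 0 < w₂) (hsum : w₁ + w₂ = 1) :
    T (w₁, w₂) = (w₂, w₁) ∧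
    (w₁ ≠ 1 / 2 →
      ∀ L : ℝ × ℝ, ¬ Tendsto (fun t => T^[t] (w₁, w₂)) atTop (𝓝 L)) := by
  have key : ∀ a b : ℝ, 0 < a → 0 < b → a + b = 1 → T (a, b) = (b, a) := by
    intro a b ha hb hab
    have hz : zbar (a, b) = a - b := by rw [hzbar]; ring
    have h1 : (1 : ℝ) - (a - b) = 2 * b := by linarith
    have h2 : (-1 : ℝ) - (a - b) = -(2 * a) := by linarith
    have hM : Mc (a, b) = 4 * a * b := by
      have hb' : a = 1 - b := by linarith
      subst hb'
      rw [hMc, hz]; ring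
    rw [hT, hz, hM]
    simp only [h1, h2, Prod.mk.injEq]
    constructor
    · field_simp; ring
    · field_simp; ring
  have hTw : T (w₁, w₂) = (w₂, w₁) := key w₁ w₂ hw₁ hw₂ hsum
  have hTw' : T (w₂, w₁) = (w₁, w₂) := key w₂ w₁ hw₂ hw₁ (by linarith)
  refine ⟨hTw, ?_⟩
  intro hne L hL
  have hiter : ∀ t, T^[t] (w₁, w₂) = if Even t then (w₁, w₂) else (w₂, w₁) := by
    intro t
    induction t with
    | zero => simp
    | succ n ih =>
      rw [Function.iterate_succ_apply', ih]
      by_cases h : Even n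
      · simp [h, Nat.even_add_one, hTw]
      · simp [h, Nat.even_add_one, hTw']
  have heven : Tendsto (fun n : ℕ => T^[2 * n] (w₁, w₂)) atTop (𝓝 L) :=
    hL.comp ((tendsto_atTop_atTop (f := fun n : ℕ => 2 * n)).mpr
      fun b => ⟨b, fun n hn => by omega⟩)
  have hodd : Tendsto (fun n : ℕ => T^[2 * n + 1] (w₁, w₂)) atTop (𝓝 L) :=
    hL.comp ((tendsto_atTop_atTop (f := fun n : ℕ => 2 * n + 1)).mpr
      fun b => ⟨b, fun n hn => by omega⟩)
  have hL1 : L = (w₁, w₂) := by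
    have : Tendsto (fun _ : ℕ => (w₁, w₂)) atTop (𝓝 L) := by
      refine heven.congr fun n => ?_
      rw [hiter]; simp [Nat.even_mul]
    exact (tendsto_nhds_unique tendsto_const_nhds this).symm
  have hL2 : L = (w₂, w₁) := by
    have : Tendsto (fun _ : ℕ => (w₂, w₁)) atTop (𝓝 L) := by
      refine hodd.congr fun n => ?_
      rw [hiter]; simp [Nat.even_add_one, Nat.even_mul]
    exact (tendsto_nhds_unique tendsto_const_nhds this).symm
  have : w₁ = w₂ := by
    have := hL1.symm.trans hL2
    exact (Prod.mk.injEq _ _ _ _ ▸ this).1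
  apply hne; linarith
end
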